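/- The completion time of a group of flows depends only on the aggregate rate function. Precisely: if r_1, …, r_n is a rate allocation for sizes s_1, …, s_n > 0 in which every flow completes (each T_i is finite), then the group completion time sup_i T_i equals inf{t : Σ_i ∫_0^t r_i(τ) dτ = Σ_i s_i}. Consequently, two rate allocations with the same aggregate rate Σ_i r_i(t) for all t, in both of which every flow completes, have equal group completion times. -/

import Mathlib

open MeasureTheory

/-- The completion time of a single flow of size `s` under rate function `r`:
`inf {t ≥ 0 : ∫_0^t r = s}`, taken in `ℝ≥0∞` so that it is `∞` if the set is empty. -/
noncomputable def flowCompletionTime (r : ℝ → ℝ) (s : ℝ) : ENNReal :=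
  sInf (ENNReal.ofReal '' {t : ℝ | 0 ≤ t ∧ (∫ τ in Set.Ioc 0 t, r τ) = s})

/-- The group completion time of `n` flows: the supremum of the individual completion times. -/
noncomputable def groupCompletionTime {n : ℕ} (r : Fin n → ℝ → ℝ) (s : Fin n → ℝ) : ENNReal :=
  ⨆ i, flowCompletionTime (r i) (s i)

/-- A rate allocation for `n` flows of sizes `s` on a single link: measurable nonnegative
rates, locally integrable, with cumulative volume never exceeding the flow sizes. -/
def IsRateAllocation {n : ℕ} (r : Fin n → ℝ → ℝ) (s : Fin n → ℝ) : Prop :=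
  (∀ i, Measurable (r i)) ∧
  (∀ i t, 0 ≤ t → 0 ≤ r i t) ∧
  (∀ i t, 0 ≤ t → IntegrableOn (r i) (Set.Ioc 0 t)) ∧
  (∀ i t, 0 ≤ t → (∫ τ in Set.Ioc 0 t, r i τ) ≤ s i)

/-- Every flow completes: for each `i` there is a time `t ≥ 0` at which the cumulative
volume of flow `i` reaches `s i`. -/
def EveryFlowCompletes {n : ℕ} (r : Fin n → ℝ → ℝ) (s : Fin n → ℝ) : Prop :=
  ∀ i, {t : ℝ | 0 ≤ t ∧ (∫ τ in Set.Ioc 0 t, r i τ) = s i}.Nonempty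

/-- The infimum of the `ENNReal.ofReal` image of a nonempty bounded-below set of reals. -/
lemma sInf_ofReal_image {S : Set ℝ} (hne : S.Nonempty) (hbd : BddBelow S) :
    sInf (ENNReal.ofReal '' S) = ENNReal.ofReal (sInf S) :=
  (Monotone.map_csInf_of_continuousAt ENNReal.continuous_ofReal.continuousAt
    (fun _ _ h => ENNReal.ofReal_le_ofReal h) hne hbd).symm

/-- Main lemma: the group completion time equals the infimum of the aggregate completion set. -/
lemma group_eq_aggregate {n : ℕ} (s : Fin n → ℝ) (hs : ∀ i, 0 < s i)
    (r : Fin n → ℝ → ℝ) (hr : IsRateAllocation r s) (hc : EveryFlowCompletes r s) :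
    groupCompletionTime r s =
      sInf (ENNReal.ofReal ''
        {t : ℝ | 0 ≤ t ∧ (∑ i, ∫ τ in Set.Ioc 0 t, r i τ) = ∑ i, s i}) := by
  obtain ⟨hmeas, hnn, hint, hbnd⟩ := hr
  -- Individual completion sets.
  set C : Fin n → Set ℝ := fun i => {t : ℝ | 0 ≤ t ∧ (∫ τ in Set.Ioc 0 t, r i τ) = s i}
    with hC
  -- Monotonicity of cumulative volumes.
  have hmono : ∀ i ⦃a b : ℝ⦄, a ≤ b → 0 ≤ b →
      (∫ τ in Set.Ioc 0 a, r i τ) ≤ ∫ τ in Set.Ioc 0 b, r i τ := by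
    intro i a b hab hb
    refine setIntegral_mono_set (hint i b hb) ?_ ?_
    · filter_upwards [ae_restrict_mem measurableSet_Ioc] with τ hτ
      exact hnn i τ (le_of_lt hτ.1)
    · exact Filter.Eventually.of_forall (Set.Ioc_subset_Ioc_right hab)
  -- Each `C i` is upward closed.
  have hup : ∀ i ⦃a b : ℝ⦄, a ∈ C i → a ≤ b → b ∈ C i := by
    intro i a b ha hab
    have hb : 0 ≤ b := le_trans ha.1 hab
    refine ⟨hb, le_antisymm (hbnd i b hb) ?_⟩
    calc s i = ∫ τ in Set.Ioc 0 a, r i τ := ha.2.symm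
    _ ≤ ∫ τ in Set.Ioc 0 b, r i τ := hmono i hab hb
  rcases n.eq_zero_or_pos with hn | hn
  · subst hn
    have h1 : groupCompletionTime r s = 0 := by
      simp [groupCompletionTime]
    have h2 : (0 : ENNReal) ∈ ENNReal.ofReal ''
        {t : ℝ | 0 ≤ t ∧ (∑ i : Fin 0, ∫ τ in Set.Ioc 0 t, r i τ) = ∑ i : Fin 0, s i} :=
      ⟨0, ⟨le_refl 0, by simp⟩, ENNReal.ofReal_zero⟩
    rw [h1]
    exact le_antisymm (zero_le) (sInf_le h2)
  · haveI : Nonempty (Fin n) := ⟨⟨0, hn⟩⟩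
    -- The aggregate completion set is the intersection of the individual ones.
    have hagg : {t : ℝ | 0 ≤ t ∧ (∑ i, ∫ τ in Set.Ioc 0 t, r i τ) = ∑ i, s i} = ⋂ i, C i := by
      ext t
      simp only [Set.mem_iInter, Set.mem_setOf_eq, hC]
      constructor
      · rintro ⟨ht, hsum⟩ i
        exact ⟨ht, (Finset.sum_eq_sum_iff_of_le
          (fun j _ => hbnd j t ht)).1 hsum i (Finset.mem_univ i)⟩
      · intro h
        exact ⟨(h ⟨0, hn⟩).1, Finset.sum_congr rfl fun j _ => (h j).2⟩
    rw [hagg]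
    -- individual infima
    have hCne : ∀ i, (C i).Nonempty := hc
    have hCbd : ∀ i, BddBelow (C i) := fun i => ⟨0, fun t ht => ht.1⟩
    set a : Fin n → ℝ := fun i => sInf (C i) with ha
    have haC : ∀ i t, t ∈ C i → a i ≤ t := fun i t ht => csInf_le (hCbd i) ht
    -- the max of the infima
    set M : ℝ := Finset.univ.sup' Finset.univ_nonempty a with hM
    have hIne : (⋂ i, C i).Nonempty := by
      obtain ⟨w, hw⟩ := Finset.exists_mem_eq_sup' Finset.univ_nonempty
        (fun i => (hCne i).choose)
      refine ⟨Finset.univ.sup' Finset.univ_nonempty (fun i => (hCne i).choose), ?_⟩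
      refine Set.mem_iInter.2 fun i => hup i (hCne i).choose_spec ?_
      exact Finset.le_sup' (fun j => (hCne j).choose) (Finset.mem_univ i)
    have hIbd : BddBelow (⋂ i, C i) := ⟨0, fun t ht => (Set.mem_iInter.1 ht ⟨0, hn⟩).1⟩
    -- sInf of the intersection equals M
    have hInfI : sInf (⋂ i, C i) = M := by
      refine le_antisymm ?_ ?_
      · -- every t > M belongs to the intersection
        have hsub : Set.Ioi M ⊆ ⋂ i, C i := by
          intro t ht
          refine Set.mem_iInter.2 fun i => ?_
          have hlt : a i < t := lt_of_le_of_lt (Finset.le_sup' a (Finset.mem_univ i)) ht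
          obtain ⟨t', ht', htt'⟩ := exists_lt_of_csInf_lt (hCne i) hlt
          exact hup i ht' (le_of_lt htt')
        calc sInf (⋂ i, C i) ≤ sInf (Set.Ioi M) :=
              csInf_le_csInf hIbd (Set.nonempty_Ioi) hsub
        _ = M := csInf_Ioi
      · refine Finset.sup'_le _ _ fun i _ => ?_
        exact le_csInf hIne fun t ht => haC i t (Set.mem_iInter.1 ht i)
    have ha0 : ∀ i, 0 ≤ a i := fun i => le_csInf (hCne i) fun t ht => ht.1
    -- compute both sides as ofReal
    have hLHS : groupCompletionTime r s = ENNReal.ofReal M := by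
      have : groupCompletionTime r s = ⨆ i, ENNReal.ofReal (a i) := by
        unfold groupCompletionTime flowCompletionTime
        exact iSup_congr fun i => sInf_ofReal_image (hCne i) (hCbd i)
      rw [this]
      obtain ⟨j, _, hj⟩ := Finset.exists_mem_eq_sup' (Finset.univ_nonempty (α := Fin n)) a
      refine le_antisymm (iSup_le fun i => ENNReal.ofReal_le_ofReal ?_) ?_
      · exact Finset.le_sup' a (Finset.mem_univ i)
      · rw [hM, hj]
        exact le_iSup (fun i => ENNReal.ofReal (a i)) j
    rw [hLHS, sInf_ofReal_image hIne hIbd, hInfI]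

/-- The completion time of a group of flows depends only on the aggregate rate function:
if every flow completes, the group completion time `sup_i T_i` equals
`inf {t : Σ_i ∫_0^t r_i = Σ_i s_i}`; consequently two allocations with the same aggregate
rate, in both of which every flow completes, have equal group completion times. -/
theorem group_completion_time_depends_only_on_aggregate
    {n : ℕ} (s : Fin n → ℝ) (hs : ∀ i, 0 < s i) :
    (∀ r : Fin n → ℝ → ℝ, IsRateAllocation r s → EveryFlowCompletes r s →
      groupCompletionTime r s =
        sInf (ENNReal.ofReal ''
          {t : ℝ | 0 ≤ t ∧ (∑ i, ∫ τ in Set.Ioc 0 t, r i τ) = ∑ i, s i})) ∧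
    (∀ r r' : Fin n → ℝ → ℝ, IsRateAllocation r s → IsRateAllocation r' s →
      EveryFlowCompletes r s → EveryFlowCompletes r' s →
      (∀ t, 0 ≤ t → (∑ i, r i t) = ∑ i, r' i t) →
      groupCompletionTime r s = groupCompletionTime r' s) := by
  constructor
  · exact fun r hr hc => group_eq_aggregate s hs r hr hc
  · intro r r' hr hr' hc hc' hagg
    rw [group_eq_aggregate s hs r hr hc, group_eq_aggregate s hs r' hr' hc']
    have hset : {t : ℝ | 0 ≤ t ∧ (∑ i, ∫ τ in Set.Ioc 0 t, r i τ) = ∑ i, s i} =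
        {t : ℝ | 0 ≤ t ∧ (∑ i, ∫ τ in Set.Ioc 0 t, r' i τ) = ∑ i, s i} := by
      ext t
      have key : ∀ (ht : 0 ≤ t),
          (∑ i, ∫ τ in Set.Ioc 0 t, r i τ) = ∑ i, ∫ τ in Set.Ioc 0 t, r' i τ := by
        intro ht
        rw [← integral_finset_sum _ (fun i _ => hr.2.2.1 i t ht),
          ← integral_finset_sum _ (fun i _ => hr'.2.2.1 i t ht)]
        refine setIntegral_congr_fun measurableSet_Ioc fun τ hτ => ?_
        exact hagg τ (le_of_lt hτ.1)
      exact ⟨fun ⟨ht, h⟩ => ⟨ht, (key ht).symm.trans h⟩, fun ⟨ht, h⟩ => ⟨ht, (key ht).trans h⟩⟩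
    rw [hset]
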